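/- Let r ∈ EuclideanSpace ℝ (Fin n) with ⟪r, ε⟫ = 0. Then the expected squared norm after one random Kaczmarz step contracts: ∑_{j=1}^{n} (‖c_j‖²/‖C‖_F²)·‖T_j r‖² ≤ (1 − σ²/‖C‖_F²)·‖r‖². -/

import Mathlib

open scoped RealInnerProductSpace

/-- The `j`-th row of `C` as a vector in Euclidean space. -/
noncomputable def row {n : ℕ} (C : Matrix (Fin n) (Fin n) ℝ) (j : Fin n) :
    EuclideanSpace ℝ (Fin n) := (WithLp.equiv 2 (Fin n → ℝ)).symm (C j)

/-- Matrix-vector multiplication, landing in Euclidean space. -/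
noncomputable def mulVecE {n : ℕ} (C : Matrix (Fin n) (Fin n) ℝ)
    (v : EuclideanSpace ℝ (Fin n)) : EuclideanSpace ℝ (Fin n) :=
  (WithLp.equiv 2 (Fin n → ℝ)).symm (C.mulVec ((WithLp.equiv 2 (Fin n → ℝ)) v))

/-- Squared Frobenius norm. -/
noncomputable def frobSq {n : ℕ} (C : Matrix (Fin n) (Fin n) ℝ) : ℝ :=
  ∑ i, ∑ j, (C i j) ^ 2

open scoped Classical in
/-- Kaczmarz update for row `j`. -/
noncomputable def kacz {n : ℕ} (C : Matrix (Fin n) (Fin n) ℝ) (j : Fin n)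
    (y : EuclideanSpace ℝ (Fin n)) : EuclideanSpace ℝ (Fin n) :=
  if row C j = 0 then y
  else y - ((⟪y, row C j⟫) / ‖row C j‖ ^ 2) • row C j

/-- Kaczmarz iteration along an index sequence `j : Fin k → Fin n`,
applying `T_{j 0}` first and `T_{j (k-1)}` last. -/
noncomputable def kaczIter {n : ℕ} (C : Matrix (Fin n) (Fin n) ℝ) :
    (k : ℕ) → (Fin k → Fin n) → EuclideanSpace ℝ (Fin n) → EuclideanSpace ℝ (Fin n)
  | 0, _, y => y
  | (k + 1), j, y => kacz C (j (Fin.last k)) (kaczIter C k (fun i => j i.castSucc) y)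

lemma row_norm_sq {n : ℕ} (C : Matrix (Fin n) (Fin n) ℝ) (j : Fin n) :
    ‖row C j‖ ^ 2 = ∑ k, (C j k)^2 := by
  rw [← real_inner_self_eq_norm_sq]
  rw [row, PiLp.inner_apply]
  simp [PiLp.toLp_apply, sq]

lemma inner_row {n : ℕ} (C : Matrix (Fin n) (Fin n) ℝ) (j : Fin n)
    (r : EuclideanSpace ℝ (Fin n)) :
    ⟪r, row C j⟫ = ∑ k, C j k * r k := by
  simp [row, PiLp.inner_apply, PiLp.toLp_apply, mul_comm]

lemma frobSq_eq {n : ℕ} (C : Matrix (Fin n) (Fin n) ℝ) :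
    frobSq C = ∑ j, ‖row C j‖ ^ 2 := by
  simp [frobSq, row_norm_sq]

lemma mulVecE_norm_sq {n : ℕ} (C : Matrix (Fin n) (Fin n) ℝ)
    (r : EuclideanSpace ℝ (Fin n)) :
    ‖mulVecE C r‖ ^ 2 = ∑ j, ⟪r, row C j⟫ ^ 2 := by
  rw [← real_inner_self_eq_norm_sq]
  simp only [mulVecE, PiLp.inner_apply, PiLp.toLp_apply,
    RCLike.inner_apply, conj_trivial, inner_row]
  refine Finset.sum_congr rfl fun j _ => ?_
  simp [Matrix.mulVec, dotProduct, sq, row, PiLp.toLp_apply, mul_comm]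

lemma kacz_norm_sq {n : ℕ} (C : Matrix (Fin n) (Fin n) ℝ) (j : Fin n)
    (r : EuclideanSpace ℝ (Fin n)) (h : row C j ≠ 0) :
    ‖kacz C j r‖ ^ 2 = ‖r‖ ^ 2 - ⟪r, row C j⟫ ^ 2 / ‖row C j‖ ^ 2 := by
  classical
  have hc : (0:ℝ) < ‖row C j‖ ^ 2 := pow_pos (norm_pos_iff.mpr h) 2
  rw [kacz, if_neg h, norm_sub_sq_real, real_inner_smul_right, norm_smul]
  rw [mul_pow, Real.norm_eq_abs, sq_abs]
  field_simp
  ring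

/-- Contraction of the expected squared norm after one random
Kaczmarz step, for vectors orthogonal to the null vector `ε`. -/
theorem kacz_expected_sq_norm_contracts {n : ℕ} (hn : 0 < n)
    (C : Matrix (Fin n) (Fin n) ℝ) (hC : C ≠ 0)
    (ε : EuclideanSpace ℝ (Fin n)) (hε : mulVecE C ε = 0)
    (σ : ℝ) (hσ0 : 0 ≤ σ)
    (hσ : ∀ z : EuclideanSpace ℝ (Fin n), ⟪z, ε⟫ = 0 →
      ‖mulVecE C z‖ ^ 2 ≥ σ ^ 2 * ‖z‖ ^ 2)
    (r : EuclideanSpace ℝ (Fin n)) (hr : ⟪r, ε⟫ = 0) :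
    ∑ j, (‖row C j‖ ^ 2 / frobSq C) * ‖kacz C j r‖ ^ 2
      ≤ (1 - σ ^ 2 / frobSq C) * ‖r‖ ^ 2 := by
  classical
  set F := frobSq C with hFdef
  have hF0 : 0 ≤ F := Finset.sum_nonneg fun i _ => Finset.sum_nonneg fun j _ => sq_nonneg _
  have hF : 0 < F := by
    rcases hF0.lt_or_eq with h | h
    · exact h
    · exfalso; apply hC
      have := h.symm
      rw [hFdef, frobSq] at this
      ext i j
      have h1 := (Finset.sum_eq_zero_iff_of_nonneg
        (fun i _ => Finset.sum_nonneg fun j _ => sq_nonneg (C i j))).mp this i (Finset.mem_univ i)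
      have h2 := (Finset.sum_eq_zero_iff_of_nonneg
        (fun j _ => sq_nonneg (C i j))).mp h1 j (Finset.mem_univ j)
      simpa [pow_eq_zero_iff] using h2
  have key : ∀ j, (‖row C j‖ ^ 2 / F) * ‖kacz C j r‖ ^ 2
      = (‖row C j‖ ^ 2 * ‖r‖ ^ 2 - ⟪r, row C j⟫ ^ 2) / F := by
    intro j
    by_cases h : row C j = 0
    · simp [h]
    · have hc : (0:ℝ) < ‖row C j‖ ^ 2 := pow_pos (norm_pos_iff.mpr h) 2
      rw [kacz_norm_sq C j r h]
      field_simp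
  rw [Finset.sum_congr rfl fun j _ => key j]
  rw [← Finset.sum_div, Finset.sum_sub_distrib, ← Finset.sum_mul, ← frobSq_eq,
    ← mulVecE_norm_sq, ← hFdef]
  have hb := hσ r hr
  rw [div_le_iff₀ hF]
  have heq : (1 - σ ^ 2 / F) * ‖r‖ ^ 2 * F = F * ‖r‖ ^ 2 - σ ^ 2 * ‖r‖ ^ 2 := by
    field_simp
  rw [heq]
  linarith [hb]
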